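/- Let q ≥ 2 and let 𝒯 = {X_1 → expr_1, …, X_n → expr_n} be an SLP representing T in which every variable occurs at least once in the derivation tree (vOcc(X_i) > 0 for all i). Then the edge set of the right q-gram neighbor graph satisfies E_r = {(X_i, X_{lm_q(X_{r(i)})}) : X_i has a nonterminal rule and lm_q(X_{r(i)}) ≠ null} ∪ {(X_{rm_q(X_{ℓ(i)})}, X_i) : X_i has a nonterminal rule and rm_q(X_{ℓ(i)}) ≠ null}. -/
import Mathlib


/-- A straight line program over alphabet `α`: variables are `Fin n` (variable
`X_i` of the paper corresponds to index `i-1`), each with either a terminal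
rule (a single character) or a nonterminal rule `X_i → X_j X_k` with `j,k < i`. -/
structure SLP (α : Type) where
  n : ℕ
  npos : 0 < n
  rule : Fin n → α ⊕ (Fin n × Fin n)
  wf : ∀ i jk, rule i = Sum.inr jk → jk.1 < i ∧ jk.2 < i

namespace SLP

variable {α : Type}

/-- the string `val(X_i)` derived by a variable -/
def val (S : SLP α) (i : Fin S.n) : List α :=
  match h : S.rule i with
  | Sum.inl a => [a]
  | Sum.inr jk =>
    have _h1 := (S.wf i jk h).1
    have _h2 := (S.wf i jk h).2
    S.val jk.1 ++ S.val jk.2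
termination_by i.val

/-- the last variable `X_n` -/
def lastIdx (S : SLP α) : Fin S.n := ⟨S.n - 1, Nat.sub_lt S.npos Nat.one_pos⟩

/-- the string `T` represented by the SLP -/
def text (S : SLP α) : List α := S.val S.lastIdx

/-- `T([i:j])`: the (1-based, inclusive) substring of a string -/
def substr (T : List α) (i j : ℕ) : List α := (T.drop (i - 1)).take (j + 1 - i)

/-- `pre(T,q)` -/
def spre (T : List α) (q : ℕ) : List α := T.take q

/-- `suf(T,q)` -/
def ssuf (T : List α) (q : ℕ) : List α := T.drop (T.length - q)

/-- `pre([b:e],q)` for intervals of positions -/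
def ipre (b e q : ℕ) : Finset ℕ := Finset.Icc b (min (b + q - 1) e)

/-- `suf([b:e],q)` for intervals of positions -/
def isuf (b e q : ℕ) : Finset ℕ := Finset.Icc (max b (e + 1 - q)) e

/-- `Occ(T,P)`: the set of (1-based) occurrences of `P` in `T` -/
def Occ [DecidableEq α] (T P : List α) : Finset ℕ :=
  (Finset.Icc 1 T.length).filter fun k => substr T k (k + P.length - 1) = P

/-- the multiset of labels of the nodes of the derivation tree rooted at
a node labeled `X_i` -/
def occsFrom (S : SLP α) (i : Fin S.n) : Multiset (Fin S.n) :=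
  match h : S.rule i with
  | Sum.inl _ => {i}
  | Sum.inr jk =>
    have _h1 := (S.wf i jk h).1
    have _h2 := (S.wf i jk h).2
    i ::ₘ (S.occsFrom jk.1 + S.occsFrom jk.2)
termination_by i.val

/-- `vOcc(X_i)`: the number of nodes of the derivation tree labeled `X_i` -/
def vOcc (S : SLP α) (i : Fin S.n) : ℕ := (S.occsFrom S.lastIdx).count i

/-- the string `t_i = suf(val(X_{ℓ(i)}),q-1) pre(val(X_{r(i)}),q-1)`
(and `[]` for a terminal rule) -/
def tstr (S : SLP α) (q : ℕ) (i : Fin S.n) : List α :=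
  match S.rule i with
  | Sum.inl _ => []
  | Sum.inr jk => ssuf (S.val jk.1) (q - 1) ++ spre (S.val jk.2) (q - 1)

/-- `label(X_i) = t_i([q:|t_i|])` -/
def labelStr (S : SLP α) (q : ℕ) (i : Fin S.n) : List α := (S.tstr q i).drop (q - 1)

/-- Nodes of the derivation tree are represented by the path from the root
(`false` = go to left child, `true` = go to right child).  `descend i p`
returns the label of the node reached from a node labeled `X_i` by path `p`. -/
def descend (S : SLP α) : Fin S.n → List Bool → Option (Fin S.n)
  | i, [] => some i
  | i, b :: p =>
    match S.rule i with
    | Sum.inl _ => none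
    | Sum.inr jk => S.descend (if b then jk.2 else jk.1) p

/-- the label of the node of the derivation tree reached by path `p` from the root -/
def nodeVar (S : SLP α) (p : List Bool) : Option (Fin S.n) := S.descend S.lastIdx p

/-- `p` is a valid node of the derivation tree -/
def IsNode (S : SLP α) (p : List Bool) : Prop := (S.nodeVar p).isSome

/-- the 0-based offset in `val(X_i)` of the part derived below path `p` -/
def offsetFrom (S : SLP α) : Fin S.n → List Bool → ℕ
  | _, [] => 0
  | i, b :: p =>
    match S.rule i with
    | Sum.inl _ => 0
    | Sum.inr jk =>
      if b then (S.val jk.1).length + S.offsetFrom jk.2 p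
      else S.offsetFrom jk.1 p

/-- the 0-based offset in `T` of the interval derived by node `p` -/
def offset (S : SLP α) (p : List Bool) : ℕ := S.offsetFrom S.lastIdx p

/-- `itv(v)`: the (1-based) interval of positions of `T` derived by node `p` -/
def itv (S : SLP α) (p : List Bool) : Finset ℕ :=
  match S.nodeVar p with
  | some i => Finset.Icc (S.offset p + 1) (S.offset p + (S.val i).length)
  | none => ∅

/-- `p = ξ(b,e)`: `p` is the deepest node whose interval contains `[b:e]`,
i.e. `itv(p) ⊇ [b:e]` and no proper descendant of `p` satisfies this. -/
def Stabs (S : SLP α) (p : List Bool) (b e : ℕ) : Prop :=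
  S.IsNode p ∧ Finset.Icc b e ⊆ S.itv p ∧
  ∀ p' : List Bool, p <+: p' → p ≠ p' → S.IsNode p' → ¬ Finset.Icc b e ⊆ S.itv p'

/-- `X_j` is a right `q`-gram neighbor of `X_i` -/
def RightNbr (S : SLP α) (q : ℕ) (i j : Fin S.n) : Prop :=
  i ≠ j ∧ ∃ u p p', 1 ≤ u ∧ u + q ≤ S.text.length ∧
    S.Stabs p u (u + q - 1) ∧ S.nodeVar p = some i ∧
    S.Stabs p' (u + 1) (u + q) ∧ S.nodeVar p' = some j

/-- `lm_q(X_i)`: the last variable of length `≥ q` on the sequence `i, ℓ(i), ℓ(ℓ(i)), …`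
(meaningful when `|val(X_i)| ≥ q`) -/
def lm (S : SLP α) (q : ℕ) (i : Fin S.n) : Fin S.n :=
  match h : S.rule i with
  | Sum.inl _ => i
  | Sum.inr jk =>
    have := (S.wf i jk h).1
    if (S.val jk.1).length < q then i else S.lm q jk.1
termination_by i.val

/-- `rm_q(X_i)`: the last variable of length `≥ q` on the sequence `i, r(i), r(r(i)), …` -/
def rm (S : SLP α) (q : ℕ) (i : Fin S.n) : Fin S.n :=
  match h : S.rule i with
  | Sum.inl _ => i
  | Sum.inr jk =>
    have := (S.wf i jk h).2
    if (S.val jk.2).length < q then i else S.rm q jk.2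
termination_by i.val

/-- `lm_q` returning `null` (`none`) when `|val(X_i)| < q` -/
def lmOpt (S : SLP α) (q : ℕ) (i : Fin S.n) : Option (Fin S.n) :=
  if (S.val i).length < q then none else some (S.lm q i)

/-- `rm_q` returning `null` (`none`) when `|val(X_i)| < q` -/
def rmOpt (S : SLP α) (q : ℕ) (i : Fin S.n) : Option (Fin S.n) :=
  if (S.val i).length < q then none else some (S.rm q i)

/-- `LSpine S i k`: `k` occurs in the sequence `i, ℓ(i), ℓ(ℓ(i)), …`
(the leftmost path of the derivation subtree rooted at a node labeled `X_i`) -/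
inductive LSpine (S : SLP α) : Fin S.n → Fin S.n → Prop
  | refl (i : Fin S.n) : LSpine S i i
  | step {i k : Fin S.n} {jk : Fin S.n × Fin S.n} :
      S.rule i = Sum.inr jk → LSpine S jk.1 k → LSpine S i k

end SLP
namespace SLP
variable {α : Type} (S : SLP α)

lemma val_inl {i : Fin S.n} {a : α} (h : S.rule i = Sum.inl a) : S.val i = [a] := by
  rw [val]; split <;> simp_all

lemma val_inr {i : Fin S.n} {jk : Fin S.n × Fin S.n} (h : S.rule i = Sum.inr jk) :
    S.val i = S.val jk.1 ++ S.val jk.2 := by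
  rw [val]; split <;> simp_all

lemma val_len_pos (i : Fin S.n) : 1 ≤ (S.val i).length := by
  match h : S.rule i with
  | Sum.inl a => simp [S.val_inl h]
  | Sum.inr jk =>
    have h1 := (S.wf i jk h).1
    have := val_len_pos jk.1
    rw [S.val_inr h]; simp; omega
termination_by i.val

lemma lm_inr {i : Fin S.n} {jk : Fin S.n × Fin S.n} (q : ℕ) (h : S.rule i = Sum.inr jk) :
    S.lm q i = if (S.val jk.1).length < q then i else S.lm q jk.1 := by
  rw [lm]; split <;> simp_all

lemma rm_inr {i : Fin S.n} {jk : Fin S.n × Fin S.n} (q : ℕ) (h : S.rule i = Sum.inr jk) :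
    S.rm q i = if (S.val jk.2).length < q then i else S.rm q jk.2 := by
  rw [rm]; split <;> simp_all

lemma lm_le (q : ℕ) (i : Fin S.n) : (S.lm q i).val ≤ i.val := by
  match h : S.rule i with
  | Sum.inl a => rw [lm]; split <;> simp_all
  | Sum.inr jk =>
    have h1 := (S.wf i jk h).1
    have := lm_le q jk.1
    rw [S.lm_inr q h]; split <;> omega
termination_by i.val

lemma rm_le (q : ℕ) (i : Fin S.n) : (S.rm q i).val ≤ i.val := by
  match h : S.rule i with
  | Sum.inl a => rw [rm]; split <;> simp_all
  | Sum.inr jk =>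
    have h2 := (S.wf i jk h).2
    have := rm_le q jk.2
    rw [S.rm_inr q h]; split <;> omega
termination_by i.val

end SLP
namespace SLP
variable {α : Type} (S : SLP α)

lemma descend_nil (i : Fin S.n) : S.descend i [] = some i := rfl

lemma descend_cons_inl {i : Fin S.n} {a : α} (h : S.rule i = Sum.inl a) (b : Bool)
    (t : List Bool) : S.descend i (b :: t) = none := by
  rw [descend]; split <;> simp_all

lemma descend_cons_inr {i : Fin S.n} {jk : Fin S.n × Fin S.n} (h : S.rule i = Sum.inr jk)
    (b : Bool) (t : List Bool) :
    S.descend i (b :: t) = S.descend (if b then jk.2 else jk.1) t := by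
  rw [descend]; split <;> simp_all

lemma offsetFrom_nil (i : Fin S.n) : S.offsetFrom i [] = 0 := rfl

lemma offsetFrom_cons_inr {i : Fin S.n} {jk : Fin S.n × Fin S.n} (h : S.rule i = Sum.inr jk)
    (b : Bool) (t : List Bool) :
    S.offsetFrom i (b :: t) =
      if b then (S.val jk.1).length + S.offsetFrom jk.2 t else S.offsetFrom jk.1 t := by
  rw [offsetFrom]; split <;> simp_all

lemma descend_append (i : Fin S.n) (p s : List Bool) :
    S.descend i (p ++ s) = (S.descend i p).bind fun k => S.descend k s := by
  induction p generalizing i with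
  | nil => simp [descend_nil]
  | cons b t ih =>
    match h : S.rule i with
    | Sum.inl a => simp [S.descend_cons_inl h]
    | Sum.inr jk => rw [List.cons_append, S.descend_cons_inr h, S.descend_cons_inr h, ih]

lemma offsetFrom_append {i k : Fin S.n} {p : List Bool} (h : S.descend i p = some k)
    (s : List Bool) : S.offsetFrom i (p ++ s) = S.offsetFrom i p + S.offsetFrom k s := by
  induction p generalizing i with
  | nil => rw [descend_nil] at h; cases h; simp [offsetFrom_nil]
  | cons b t ih =>
    match hr : S.rule i with
    | Sum.inl a => rw [S.descend_cons_inl hr] at h; cases h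
    | Sum.inr jk =>
      rw [S.descend_cons_inr hr] at h
      rw [List.cons_append, S.offsetFrom_cons_inr hr, S.offsetFrom_cons_inr hr]
      cases b <;> simp_all [ih h]
      omega

lemma offsetFrom_len_le {i k : Fin S.n} {s : List Bool} (h : S.descend i s = some k) :
    S.offsetFrom i s + (S.val k).length ≤ (S.val i).length := by
  induction s generalizing i with
  | nil => rw [descend_nil] at h; cases h; simp [offsetFrom_nil]
  | cons b t ih =>
    match hr : S.rule i with
    | Sum.inl a => rw [S.descend_cons_inl hr] at h; cases h
    | Sum.inr jk =>
      rw [S.descend_cons_inr hr] at h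
      rw [S.offsetFrom_cons_inr hr, S.val_inr hr]
      cases b <;> simp only [if_true, if_false, Bool.false_eq_true] at h ⊢ <;>
        [skip; skip] <;> (have := ih h; simp; omega)

end SLP
namespace SLP
variable {α : Type} (S : SLP α)

lemma itv_eq {p : List Bool} {k : Fin S.n} (h : S.nodeVar p = some k) :
    S.itv p = Finset.Icc (S.offset p + 1) (S.offset p + (S.val k).length) := by
  rw [itv]; split <;> simp_all

lemma isNode_of_nodeVar {p : List Bool} {k : Fin S.n} (h : S.nodeVar p = some k) :
    S.IsNode p := by rw [IsNode, h]; rfl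

lemma chain : ∀ (s : List Bool) (s' : List Bool) (i : Fin S.n) (o x : ℕ) (k k' : Fin S.n),
    S.descend i s = some k → S.descend i s' = some k' →
    o + S.offsetFrom i s + 1 ≤ x → x ≤ o + S.offsetFrom i s + (S.val k).length →
    o + S.offsetFrom i s' + 1 ≤ x → x ≤ o + S.offsetFrom i s' + (S.val k').length →
    s <+: s' ∨ s' <+: s := by
  intro s
  induction s with
  | nil => intro s' _ _ _ _ _ _ _ _ _ _ _; exact Or.inl (List.nil_prefix)
  | cons b t ih =>
    intro s' i o x k k' hd hd' h1 h2 h3 h4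
    match s' with
    | [] => exact Or.inr (List.nil_prefix)
    | b' :: t' =>
      match hr : S.rule i with
      | Sum.inl a => rw [S.descend_cons_inl hr] at hd; cases hd
      | Sum.inr jk =>
        rw [S.descend_cons_inr hr] at hd hd'
        rw [S.offsetFrom_cons_inr hr] at h1 h2 h3 h4
        have hle : S.offsetFrom jk.1 t + (S.val k).length ≤ (S.val jk.1).length ∨ b = true := by
          cases b
          · simp at hd; exact Or.inl (S.offsetFrom_len_le hd)
          · exact Or.inr rfl
        have hle' : S.offsetFrom jk.1 t' + (S.val k').length ≤ (S.val jk.1).length ∨ b' = true := by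
          cases b'
          · simp at hd'; exact Or.inl (S.offsetFrom_len_le hd')
          · exact Or.inr rfl
        cases b <;> cases b' <;> simp only [if_true, if_false, Bool.false_eq_true] at *
        · rcases ih t' jk.1 o x k k' hd hd' h1 h2 h3 h4 with h | h
          · exact Or.inl (List.cons_prefix_cons.mpr ⟨rfl, h⟩)
          · exact Or.inr (List.cons_prefix_cons.mpr ⟨rfl, h⟩)
        · -- b = false, b' = true : disjoint
          exfalso
          rcases hle with hle | hle
          · omega
          · cases hle
        · exfalso
          rcases hle' with hle' | hle'
          · omega
          · cases hle'
        · have e1 : o + ((S.val jk.1).length + S.offsetFrom jk.2 t) =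
              (o + (S.val jk.1).length) + S.offsetFrom jk.2 t := by omega
          have e2 : o + ((S.val jk.1).length + S.offsetFrom jk.2 t') =
              (o + (S.val jk.1).length) + S.offsetFrom jk.2 t' := by omega
          rw [e1] at h1 h2; rw [e2] at h3 h4
          rcases ih t' jk.2 (o + (S.val jk.1).length) x k k' hd hd' h1 h2 h3 h4 with h | h
          · exact Or.inl (List.cons_prefix_cons.mpr ⟨rfl, h⟩)
          · exact Or.inr (List.cons_prefix_cons.mpr ⟨rfl, h⟩)

/-- top-level version: two nodes whose intervals share a point are comparable -/
lemma node_comparable {p p' : List Bool} {k k' : Fin S.n} {x : ℕ}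
    (h : S.nodeVar p = some k) (h' : S.nodeVar p' = some k')
    (hx : x ∈ S.itv p) (hx' : x ∈ S.itv p') : p <+: p' ∨ p' <+: p := by
  rw [S.itv_eq h, Finset.mem_Icc] at hx
  rw [S.itv_eq h', Finset.mem_Icc] at hx'
  exact S.chain p p' S.lastIdx 0 x k k' h h'
    (by unfold offset at hx; omega) (by unfold offset at hx; omega)
    (by unfold offset at hx'; omega) (by unfold offset at hx'; omega)

end SLP
namespace SLP
variable {α : Type} (S : SLP α)

lemma nodeVar_append_cons {p : List Bool} {c : Fin S.n} {jk : Fin S.n × Fin S.n}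
    (hc : S.nodeVar p = some c) (hr : S.rule c = Sum.inr jk) (b : Bool) (t : List Bool) :
    S.nodeVar (p ++ b :: t) = S.descend (if b then jk.2 else jk.1) t := by
  rw [nodeVar, S.descend_append]
  rw [nodeVar] at hc
  rw [hc, Option.bind_some, S.descend_cons_inr hr]

lemma offset_append_cons {p : List Bool} {c : Fin S.n} {jk : Fin S.n × Fin S.n}
    (hc : S.nodeVar p = some c) (hr : S.rule c = Sum.inr jk) (b : Bool) (t : List Bool) :
    S.offset (p ++ b :: t) = S.offset p +
      (if b then (S.val jk.1).length + S.offsetFrom jk.2 t else S.offsetFrom jk.1 t) := by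
  rw [nodeVar] at hc
  rw [offset, S.offsetFrom_append hc, S.offsetFrom_cons_inr hr]; rfl

lemma node_child {p : List Bool} {c : Fin S.n} {jk : Fin S.n × Fin S.n}
    (hc : S.nodeVar p = some c) (hr : S.rule c = Sum.inr jk) (b : Bool) :
    S.nodeVar (p ++ [b]) = some (if b then jk.2 else jk.1) ∧
      S.offset (p ++ [b]) = S.offset p + (if b then (S.val jk.1).length else 0) := by
  constructor
  · rw [S.nodeVar_append_cons hc hr b [], descend_nil]
  · rw [S.offset_append_cons hc hr b []]
    cases b <;> simp [offsetFrom_nil]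

/-- bounds on the interval of a proper descendant (left case) -/
lemma ext_bounds_left {p : List Bool} {c k : Fin S.n} {jk : Fin S.n × Fin S.n}
    (hc : S.nodeVar p = some c) (hr : S.rule c = Sum.inr jk) {t : List Bool}
    (hk : S.nodeVar (p ++ false :: t) = some k) :
    S.offset p ≤ S.offset (p ++ false :: t) ∧
      S.offset (p ++ false :: t) + (S.val k).length ≤ S.offset p + (S.val jk.1).length := by
  rw [S.nodeVar_append_cons hc hr] at hk
  rw [S.offset_append_cons hc hr]
  simp only [if_false, Bool.false_eq_true] at hk ⊢
  have := S.offsetFrom_len_le hk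
  exact ⟨by omega, by omega⟩

/-- bounds on the interval of a proper descendant (right case) -/
lemma ext_bounds_right {p : List Bool} {c k : Fin S.n} {jk : Fin S.n × Fin S.n}
    (hc : S.nodeVar p = some c) (hr : S.rule c = Sum.inr jk) {t : List Bool}
    (hk : S.nodeVar (p ++ true :: t) = some k) :
    S.offset p + (S.val jk.1).length ≤ S.offset (p ++ true :: t) ∧
      S.offset (p ++ true :: t) + (S.val k).length ≤ S.offset p + (S.val c).length := by
  rw [S.nodeVar_append_cons hc hr] at hk
  rw [S.offset_append_cons hc hr]
  have hlen : (S.val c).length = (S.val jk.1).length + (S.val jk.2).length := by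
    rw [S.val_inr hr]; simp
  simp only [if_true] at hk ⊢
  have := S.offsetFrom_len_le hk
  exact ⟨by omega, by omega⟩

lemma stabs_mid {p : List Bool} {c : Fin S.n} {jk : Fin S.n × Fin S.n} {bb ee : ℕ}
    (hc : S.nodeVar p = some c) (hr : S.rule c = Sum.inr jk)
    (h1 : S.offset p + 1 ≤ bb) (h2 : bb ≤ S.offset p + (S.val jk.1).length)
    (h3 : S.offset p + (S.val jk.1).length < ee) (h4 : ee ≤ S.offset p + (S.val c).length) :
    S.Stabs p bb ee := by
  refine ⟨S.isNode_of_nodeVar hc, ?_, ?_⟩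
  · rw [S.itv_eq hc]; exact Finset.Icc_subset_Icc (by omega) (by omega)
  · rintro p' ⟨s, rfl⟩ hne hnode hsub
    match s with
    | [] => exact hne (by simp)
    | b :: t =>
      obtain ⟨k, hk⟩ := Option.isSome_iff_exists.mp hnode
      have hb := hsub (Finset.mem_Icc.mpr ⟨le_refl bb, by omega⟩)
      have he := hsub (Finset.mem_Icc.mpr ⟨by omega, le_refl ee⟩)
      rw [S.itv_eq hk, Finset.mem_Icc] at hb he
      cases b
      · have := S.ext_bounds_left hc hr hk; omega
      · have := S.ext_bounds_right hc hr hk; omega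

lemma stabs_lm {q : ℕ} (hq : 2 ≤ q) (c : Fin S.n) (r : List Bool)
    (hc : S.nodeVar r = some c) (hlen : q ≤ (S.val c).length) :
    ∃ p', r <+: p' ∧ S.nodeVar p' = some (S.lm q c) ∧
      S.Stabs p' (S.offset r + 1) (S.offset r + q) := by
  match hr : S.rule c with
  | Sum.inl a =>
    rw [S.val_inl hr] at hlen; simp at hlen; omega
  | Sum.inr jk =>
    have hwf := (S.wf c jk hr).1
    have hlen2 : (S.val c).length = (S.val jk.1).length + (S.val jk.2).length := by
      rw [S.val_inr hr]; simp
    have hl1 := S.val_len_pos jk.1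
    have hl2 := S.val_len_pos jk.2
    by_cases hcase : (S.val jk.1).length < q
    · refine ⟨r, List.prefix_refl _, ?_, ?_, ?_, ?_⟩
      · rw [S.lm_inr q hr, if_pos hcase]; exact hc
      · exact S.isNode_of_nodeVar hc
      · rw [S.itv_eq hc]; exact Finset.Icc_subset_Icc (by omega) (by omega)
      · rintro p' ⟨s, rfl⟩ hne hnode hsub
        match s with
        | [] => exact hne (by simp)
        | b :: t =>
          obtain ⟨k, hk⟩ := Option.isSome_iff_exists.mp hnode
          have hb := hsub (Finset.mem_Icc.mpr ⟨le_refl _, by omega⟩)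
          have he := hsub (Finset.mem_Icc.mpr ⟨by omega, le_refl _⟩)
          rw [S.itv_eq hk, Finset.mem_Icc] at hb he
          cases b
          · have := S.ext_bounds_left hc hr hk; omega
          · have := S.ext_bounds_right hc hr hk; omega
    · push_neg at hcase
      have hchild := S.node_child hc hr false
      simp only [if_false, Bool.false_eq_true] at hchild
      obtain ⟨p', hpre, hvar, hst⟩ := stabs_lm hq jk.1 (r ++ [false]) hchild.1 hcase
      rw [hchild.2] at hst
      simp only [Nat.add_zero] at hst
      refine ⟨p', (List.prefix_append r [false]).trans hpre, ?_, hst⟩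
      rw [S.lm_inr q hr, if_neg (by omega)]; exact hvar
termination_by c.val

lemma stabs_rm {q : ℕ} (hq : 2 ≤ q) (c : Fin S.n) (r : List Bool)
    (hc : S.nodeVar r = some c) (hlen : q ≤ (S.val c).length) :
    ∃ p', r <+: p' ∧ S.nodeVar p' = some (S.rm q c) ∧
      S.Stabs p' (S.offset r + ((S.val c).length - q) + 1)
        (S.offset r + (S.val c).length) := by
  match hr : S.rule c with
  | Sum.inl a =>
    rw [S.val_inl hr] at hlen; simp at hlen; omega
  | Sum.inr jk =>
    have hwf := (S.wf c jk hr).2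
    have hlen2 : (S.val c).length = (S.val jk.1).length + (S.val jk.2).length := by
      rw [S.val_inr hr]; simp
    have hl1 := S.val_len_pos jk.1
    have hl2 := S.val_len_pos jk.2
    by_cases hcase : (S.val jk.2).length < q
    · refine ⟨r, List.prefix_refl _, ?_, ?_, ?_, ?_⟩
      · rw [S.rm_inr q hr, if_pos hcase]; exact hc
      · exact S.isNode_of_nodeVar hc
      · rw [S.itv_eq hc]; exact Finset.Icc_subset_Icc (by omega) (by omega)
      · rintro p' ⟨s, rfl⟩ hne hnode hsub
        match s with
        | [] => exact hne (by simp)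
        | b :: t =>
          obtain ⟨k, hk⟩ := Option.isSome_iff_exists.mp hnode
          have hb := hsub (Finset.mem_Icc.mpr ⟨le_refl _, by omega⟩)
          have he := hsub (Finset.mem_Icc.mpr ⟨by omega, le_refl _⟩)
          rw [S.itv_eq hk, Finset.mem_Icc] at hb he
          cases b
          · have := S.ext_bounds_left hc hr hk; omega
          · have := S.ext_bounds_right hc hr hk; omega
    · push_neg at hcase
      have hchild := S.node_child hc hr true
      simp only [if_true] at hchild
      obtain ⟨p', hpre, hvar, hst⟩ := stabs_rm hq jk.2 (r ++ [true]) hchild.1 hcase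
      rw [hchild.2] at hst
      have e1 : S.offset r + (S.val jk.1).length + ((S.val jk.2).length - q) + 1 =
          S.offset r + ((S.val c).length - q) + 1 := by omega
      have e2 : S.offset r + (S.val jk.1).length + (S.val jk.2).length =
          S.offset r + (S.val c).length := by omega
      rw [e1, e2] at hst
      refine ⟨p', (List.prefix_append r [true]).trans hpre, ?_, hst⟩
      rw [S.rm_inr q hr, if_neg (by omega)]; exact hvar
termination_by c.val

end SLP
namespace SLP
variable {α : Type} (S : SLP α)

lemma stabs_unique {p p' : List Bool} {b e : ℕ} (hbe : b ≤ e)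
    (h : S.Stabs p b e) (h' : S.Stabs p' b e) : p = p' := by
  obtain ⟨hn, hs, hd⟩ := h
  obtain ⟨hn', hs', hd'⟩ := h'
  obtain ⟨k, hk⟩ := Option.isSome_iff_exists.mp hn
  obtain ⟨k', hk'⟩ := Option.isSome_iff_exists.mp hn'
  have hb : b ∈ S.itv p := hs (Finset.mem_Icc.mpr ⟨le_refl b, hbe⟩)
  have hb' : b ∈ S.itv p' := hs' (Finset.mem_Icc.mpr ⟨le_refl b, hbe⟩)
  rcases S.node_comparable hk hk' hb hb' with hp | hp
  · by_contra hne
    exact hd p' hp hne hn' hs'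
  · by_contra hne
    exact hd' p hp (fun h => hne h.symm) hn hs

lemma occsFrom_inl {i : Fin S.n} {a : α} (h : S.rule i = Sum.inl a) :
    S.occsFrom i = {i} := by
  rw [occsFrom]; split <;> simp_all

lemma occsFrom_inr {i : Fin S.n} {jk : Fin S.n × Fin S.n} (h : S.rule i = Sum.inr jk) :
    S.occsFrom i = i ::ₘ (S.occsFrom jk.1 + S.occsFrom jk.2) := by
  rw [occsFrom]; split <;> simp_all

lemma exists_descend {i k : Fin S.n} (h : k ∈ S.occsFrom i) :
    ∃ s, S.descend i s = some k := by
  match hr : S.rule i with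
  | Sum.inl a =>
    rw [S.occsFrom_inl hr] at h
    simp at h; subst h; exact ⟨[], rfl⟩
  | Sum.inr jk =>
    have h1 := (S.wf i jk hr).1
    have h2 := (S.wf i jk hr).2
    rw [S.occsFrom_inr hr] at h
    rw [Multiset.mem_cons] at h
    rcases h with h | h
    · subst h; exact ⟨[], rfl⟩
    · rw [Multiset.mem_add] at h
      rcases h with h | h
      · obtain ⟨s, hs⟩ := exists_descend h
        exact ⟨false :: s, by rw [S.descend_cons_inr hr]; simpa using hs⟩
      · obtain ⟨s, hs⟩ := exists_descend h
        exact ⟨true :: s, by rw [S.descend_cons_inr hr]; simpa using hs⟩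
termination_by i.val

lemma exists_node {i : Fin S.n} (h : 1 ≤ S.vOcc i) : ∃ p, S.nodeVar p = some i := by
  rw [vOcc] at h
  haveI := Multiset.count_pos.mp (by omega : 0 < (S.occsFrom S.lastIdx).count i)
  exact S.exists_descend this

lemma offset_len_le_text {p : List Bool} {k : Fin S.n} (h : S.nodeVar p = some k) :
    S.offset p + (S.val k).length ≤ S.text.length :=
  S.offsetFrom_len_le h

lemma rule_inr_of_len {c : Fin S.n} (h2 : 2 ≤ (S.val c).length) :
    ∃ jk, S.rule c = Sum.inr jk := by
  match hr : S.rule c with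
  | Sum.inl a => rw [S.val_inl hr] at h2; simp at h2
  | Sum.inr jk => exact ⟨jk, rfl⟩

/-- a stabbed interval must straddle the boundary between the two children -/
lemma straddle {p : List Bool} {c : Fin S.n} {jk : Fin S.n × Fin S.n} {bb ee : ℕ}
    (hc : S.nodeVar p = some c) (hr : S.rule c = Sum.inr jk)
    (hst : S.Stabs p bb ee) (hbe : bb ≤ ee) :
    bb ≤ S.offset p + (S.val jk.1).length ∧ S.offset p + (S.val jk.1).length < ee := by
  have hlen : (S.val c).length = (S.val jk.1).length + (S.val jk.2).length := by
    rw [S.val_inr hr]; simp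
  have hsub := hst.2.1
  have hbbm := hsub (Finset.mem_Icc.mpr ⟨le_refl bb, hbe⟩)
  have heem := hsub (Finset.mem_Icc.mpr ⟨hbe, le_refl ee⟩)
  rw [S.itv_eq hc, Finset.mem_Icc] at hbbm heem
  have hcl := S.node_child hc hr false
  have hcr := S.node_child hc hr true
  simp only [if_true, if_false, Bool.false_eq_true] at hcl hcr
  have hnl := hst.2.2 (p ++ [false]) (List.prefix_append _ _) (by simp)
    (S.isNode_of_nodeVar hcl.1)
  have hnr := hst.2.2 (p ++ [true]) (List.prefix_append _ _) (by simp)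
    (S.isNode_of_nodeVar hcr.1)
  obtain ⟨x, hx1, hx2⟩ := Finset.not_subset.mp hnl
  obtain ⟨y, hy1, hy2⟩ := Finset.not_subset.mp hnr
  rw [Finset.mem_Icc] at hx1 hy1
  rw [S.itv_eq hcl.1, Finset.mem_Icc, hcl.2] at hx2
  rw [S.itv_eq hcr.1, Finset.mem_Icc, hcr.2] at hy2
  push_neg at hx2 hy2
  constructor
  · rcases Nat.lt_or_ge (S.offset p + (S.val jk.1).length) y with hlt | hge
    · omega
    · omega
  · rcases Nat.lt_or_ge (S.offset p + (S.val jk.1).length) x with hlt | hge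
    · omega
    · omega

end SLP
/-- if every variable occurs in the derivation tree, then the
edge set of the right `q`-gram neighbor graph is exactly
`{(X_i, X_{lm_q(X_{r(i)})})} ∪ {(X_{rm_q(X_{ℓ(i)})}, X_i)}` (over nonterminal
variables `X_i`, restricted to the cases where `lm_q`/`rm_q` is not `null`). -/
theorem stmt7 {α : Type} (q : ℕ) (hq : 2 ≤ q) (S : SLP α)
    (hocc : ∀ i, 1 ≤ S.vOcc i) :
    {ij : Fin S.n × Fin S.n | S.RightNbr q ij.1 ij.2} =
      {ij : Fin S.n × Fin S.n |
        ∃ jk, S.rule ij.1 = Sum.inr jk ∧ S.lmOpt q jk.2 = some ij.2} ∪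
      {ij : Fin S.n × Fin S.n |
        ∃ jk, S.rule ij.2 = Sum.inr jk ∧ S.rmOpt q jk.1 = some ij.1} := by
  ext ⟨i, j⟩
  simp only [Set.mem_setOf_eq, Set.mem_union]
  constructor
  · rintro ⟨hij, u, p, p', hu1, hu2, hsp, hvp, hsp', hvp'⟩
    -- basic facts
    have hm1 : u ∈ S.itv p := hsp.2.1 (Finset.mem_Icc.mpr ⟨le_refl u, by omega⟩)
    have hm2 : u + q - 1 ∈ S.itv p := hsp.2.1 (Finset.mem_Icc.mpr ⟨by omega, le_refl _⟩)
    have hm3 : u + 1 ∈ S.itv p := hsp.2.1 (Finset.mem_Icc.mpr ⟨by omega, by omega⟩)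
    have hm3' : u + 1 ∈ S.itv p' := hsp'.2.1 (Finset.mem_Icc.mpr ⟨le_refl _, by omega⟩)
    have hm4' : u + q ∈ S.itv p' := hsp'.2.1 (Finset.mem_Icc.mpr ⟨by omega, le_refl _⟩)
    rcases S.node_comparable hvp hvp' hm3 hm3' with hpre | hpre
    · -- p is a prefix of p'
      have hne : p ≠ p' := by
        intro h; subst h; rw [hvp] at hvp'; exact hij (Option.some_injective _ hvp')
      -- the rule of i is nonterminal
      have hmm1 := hm1; have hmm2 := hm2
      rw [S.itv_eq hvp, Finset.mem_Icc] at hmm1 hmm2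
      obtain ⟨jk, hri⟩ := S.rule_inr_of_len (c := i) (by omega)
      have hstr := S.straddle hvp hri hsp (by omega)
      have hlen : (S.val i).length = (S.val jk.1).length + (S.val jk.2).length := by
        rw [S.val_inr hri]; simp
      obtain ⟨s, rfl⟩ := hpre
      match s, hne with
      | [], hne' => simp at hne'
      | b :: t, _ =>
        have hmm3' := hm3'; have hmm4' := hm4'
        rw [S.itv_eq hvp', Finset.mem_Icc] at hmm3' hmm4'
        cases b
        · exfalso
          have := S.ext_bounds_left hvp hri hvp'
          omega
        · have hb := S.ext_bounds_right hvp hri hvp'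
          have hM : S.offset p + (S.val jk.1).length = u := by omega
          have hcr := S.node_child hvp hri true
          simp only [if_true] at hcr
          have hql : q ≤ (S.val jk.2).length := by omega
          obtain ⟨p0, hpre0, hvar0, hst0⟩ := S.stabs_lm hq jk.2 (p ++ [true]) hcr.1 hql
          rw [hcr.2, hM] at hst0
          have := S.stabs_unique (by omega) hsp' hst0
          subst this
          rw [hvar0] at hvp'
          refine Or.inl ⟨jk, hri, ?_⟩
          rw [SLP.lmOpt, if_neg (by omega)]
          exact hvp'
    · -- p' is a prefix of p
      have hne : p' ≠ p := by
        intro h; subst h; rw [hvp] at hvp'; exact hij (Option.some_injective _ hvp')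
      have hmm3' := hm3'; have hmm4' := hm4'
      rw [S.itv_eq hvp', Finset.mem_Icc] at hmm3' hmm4'
      obtain ⟨jk, hrj⟩ := S.rule_inr_of_len (c := j) (by omega)
      have hstr := S.straddle hvp' hrj hsp' (by omega)
      have hlen : (S.val j).length = (S.val jk.1).length + (S.val jk.2).length := by
        rw [S.val_inr hrj]; simp
      obtain ⟨s, rfl⟩ := hpre
      match s, hne with
      | [], hne' => simp at hne'
      | b :: t, _ =>
        have hmm1 := hm1; have hmm2 := hm2
        rw [S.itv_eq hvp, Finset.mem_Icc] at hmm1 hmm2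
        cases b
        · have hb := S.ext_bounds_left hvp' hrj hvp
          have hM : S.offset p' + (S.val jk.1).length = u + q - 1 := by omega
          have hcl := S.node_child hvp' hrj false
          simp only [if_false, Bool.false_eq_true] at hcl
          have hql : q ≤ (S.val jk.1).length := by omega
          obtain ⟨p0, hpre0, hvar0, hst0⟩ := S.stabs_rm hq jk.1 (p' ++ [false]) hcl.1 hql
          rw [hcl.2] at hst0
          simp only [Nat.add_zero] at hst0
          have e1 : S.offset p' + ((S.val jk.1).length - q) + 1 = u := by omega
          have e2 : S.offset p' + (S.val jk.1).length = u + q - 1 := hM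
          rw [e1, e2] at hst0
          have := S.stabs_unique (by omega) hsp hst0
          subst this
          rw [hvar0] at hvp
          refine Or.inr ⟨jk, hrj, ?_⟩
          rw [SLP.rmOpt, if_neg (by omega)]
          exact hvp
        · exfalso
          have := S.ext_bounds_right hvp' hrj hvp
          omega
  · rintro (⟨jk, hri, hlm⟩ | ⟨jk, hrj, hrm⟩)
    · -- (i, lm q jk.2)
      rw [SLP.lmOpt] at hlm
      split at hlm
      · cases hlm
      · rename_i hql
        push_neg at hql
        have hj : S.lm q jk.2 = j := Option.some_injective _ hlm
        obtain ⟨p, hvp⟩ := S.exists_node (hocc i)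
        have hlen : (S.val i).length = (S.val jk.1).length + (S.val jk.2).length := by
          rw [S.val_inr hri]; simp
        have hl1 := S.val_len_pos jk.1
        have hl2 := S.val_len_pos jk.2
        set o := S.offset p with ho
        set u := o + (S.val jk.1).length with hu
        have hij : i ≠ j := by
          intro h
          have h1 := S.lm_le q jk.2
          have h2 := (S.wf i jk hri).2
          rw [hj, ← h] at h1
          omega
        have hT := S.offset_len_le_text hvp
        refine ⟨hij, u, p, ?_⟩
        have hcr := S.node_child hvp hri true
        simp only [if_true] at hcr
        obtain ⟨p0, hpre0, hvar0, hst0⟩ := S.stabs_lm hq jk.2 (p ++ [true]) hcr.1 hql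
        rw [hcr.2] at hst0
        refine ⟨p0, by omega, by omega, ?_, hvp, ?_, by rw [hvar0, hj]⟩
        · exact S.stabs_mid hvp hri (by omega) (by omega) (by omega) (by omega)
        · exact hst0
    · -- (rm q jk.1, j)
      rw [SLP.rmOpt] at hrm
      split at hrm
      · cases hrm
      · rename_i hql
        push_neg at hql
        have hi : S.rm q jk.1 = i := Option.some_injective _ hrm
        obtain ⟨p', hvp'⟩ := S.exists_node (hocc j)
        have hlen : (S.val j).length = (S.val jk.1).length + (S.val jk.2).length := by
          rw [S.val_inr hrj]; simp
        have hl1 := S.val_len_pos jk.1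
        have hl2 := S.val_len_pos jk.2
        set o := S.offset p' with ho
        set u := o + ((S.val jk.1).length - q) + 1 with hu
        have hij : i ≠ j := by
          intro h
          have h1 := S.rm_le q jk.1
          have h2 := (S.wf j jk hrj).1
          rw [hi, h] at h1
          omega
        have hT := S.offset_len_le_text hvp'
        have hcl := S.node_child hvp' hrj false
        simp only [if_false, Bool.false_eq_true] at hcl
        obtain ⟨p0, hpre0, hvar0, hst0⟩ := S.stabs_rm hq jk.1 (p' ++ [false]) hcl.1 hql
        rw [hcl.2] at hst0
        simp only [Nat.add_zero] at hst0
        refine ⟨hij, u, p0, ?_⟩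
        have e1 : o + ((S.val jk.1).length - q) + 1 = u := rfl
        have e2 : o + (S.val jk.1).length = u + q - 1 := by omega
        rw [e2] at hst0
        refine ⟨p', by omega, by omega, ?_, by rw [hvar0, hi], ?_, hvp'⟩
        · exact hst0
        · refine S.stabs_mid hvp' hrj (by omega) (by omega) (by omega) (by omega)
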